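/- arXiv:1410.0099 — 4 statements merged into one kernel-verified Lean document; each statement's English description precedes it below -/
import Mathlib

section
/- Let (V,P) be a mixing Markov chain with induced stationary measure μ on V^ℕ, and let Δ_n = Σ_{u ∈ V_n} μ(u)². Define Q(u,v) = P(u,v)² and let λ be the Perron eigenvalue (spectral radius) of Q. Then lim_{n→∞} (1/n)·log Δ_n = log λ. -/
open Finset Filter
open scoped ENNReal

noncomputable section

variable {V : Type*}

/-- `P` is a stochastic transition matrix. -/
def IsStochastic [Fintype V] (P : Matrix V V ℝ) : Prop :=
  (∀ u v, 0 ≤ P u v) ∧ ∀ u, ∑ v, P u v = 1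

/-- The chain `(V,P)` is mixing: some power of `P` has all entries positive. -/
def IsMixing [Fintype V] [DecidableEq V] (P : Matrix V V ℝ) : Prop :=
  ∃ n : ℕ, 0 < n ∧ ∀ u v, 0 < (P ^ n) u v

/-- `pi` is a stationary distribution for `P`. -/
def IsStationaryVec [Fintype V] (P : Matrix V V ℝ) (pi : V → ℝ) : Prop :=
  (∀ v, 0 ≤ pi v) ∧ (∑ v, pi v = 1) ∧ ∀ v, ∑ u, pi u * P u v = pi v

/-- One step of the chain killed on the set `B`. -/
def killedStep [Fintype V] [DecidableEq V] (P : Matrix V V ℝ) (B : Finset V) (ν : V → ℝ) : V → ℝ :=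
  fun v => ∑ u, if u ∈ B then 0 else ν u * P u v

/-- `avoidProb P B ν t = P_ν(T_B > t)`, the probability that the chain with initial
distribution `ν` avoids `B` at all times `0,…,t`; here `T_B = inf {t ≥ 0 : X_t ∈ B}`. -/
def avoidProb [Fintype V] [DecidableEq V] (P : Matrix V V ℝ) (B : Finset V) (ν : V → ℝ) (t : ℕ) : ℝ :=
  ∑ u, if u ∈ B then 0 else ((killedStep P B)^[t] ν) u

/-- Point mass at `v`. -/
def pointMass [DecidableEq V] (v : V) : V → ℝ := fun u => if u = v then 1 else 0

/-- `E_v(T_B)`, as an extended real (infinite if `B` is not reachable). -/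
def hitExp [Fintype V] [DecidableEq V] (P : Matrix V V ℝ) (B : Finset V) (v : V) : ℝ≥0∞ :=
  ∑' t : ℕ, ENNReal.ofReal (avoidProb P B (pointMass v) t)

/-- `m_B = max_v E_v(T_B)`. -/
def maxHitExp [Fintype V] [DecidableEq V] (P : Matrix V V ℝ) (B : Finset V) : ℝ≥0∞ :=
  ⨆ v : V, hitExp P B v

/-- Transition matrix of two independent walkers. -/
def prodMatrix (P : Matrix V V ℝ) : Matrix (V × V) (V × V) ℝ :=
  fun p q => P p.1 q.1 * P p.2 q.2

/-- The diagonal of `V × V`. -/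
def diagSet (V : Type*) [Fintype V] [DecidableEq V] : Finset (V × V) :=
  univ.filter fun p => p.1 = p.2

/-- `P(m(u,v) > t)`: the probability that two independent walkers started at `u` and `v`
have not met by time `t`. -/
def meetSurvival [Fintype V] [DecidableEq V] (P : Matrix V V ℝ) (u v : V) (t : ℕ) : ℝ :=
  avoidProb (prodMatrix P) (diagSet V) (pointMass (u, v)) t

/-- `E(m(u,v))`, the expected meeting time of walkers started at `u`, `v`. -/
def meetExp [Fintype V] [DecidableEq V] (P : Matrix V V ℝ) (u v : V) : ℝ :=
  ∑' t : ℕ, meetSurvival P u v t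

/-- `m* = max_{u,v} E(m(u,v))`. -/
def maxMeetExp [Fintype V] [DecidableEq V] (P : Matrix V V ℝ) : ℝ :=
  ⨆ p : V × V, meetExp P p.1 p.2

/-- `m̄ = Σ_{u,v} pi(u) pi(v) E(m(u,v))`. -/
def meanMeetExp [Fintype V] [DecidableEq V] (P : Matrix V V ℝ) (pi : V → ℝ) : ℝ :=
  ∑ u, ∑ v, pi u * pi v * meetExp P u v

/-- Transition matrix of the coalescing random walk: the state `f : V → V` records the
current position of the walker started at each site; walkers at the same site move together. -/
def coalMatrix [Fintype V] [DecidableEq V] (P : Matrix V V ℝ) : Matrix (V → V) (V → V) ℝ :=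
  fun f g =>
    if ∀ u v, f u = f v → g u = g v then
      ∏ s ∈ univ.image f, (if h : ∃ u, f u = s then P s (g h.choose) else 0)
    else 0

/-- Constant maps: the coalescing walk has fully coalesced exactly when its state is constant. -/
def constSet (V : Type*) [Fintype V] [DecidableEq V] : Finset (V → V) :=
  univ.filter fun f => ∀ u v : V, f u = f v

/-- `P(C > t)`: the probability that the coalescing random walk started with one walker on
each state has not fully coalesced by time `t`. -/
def coalSurvival [Fintype V] [DecidableEq V] (P : Matrix V V ℝ) (t : ℕ) : ℝ :=
  avoidProb (coalMatrix P) (constSet V) (pointMass id) t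

/-- `E(C)`, the expected full coalescence time. -/
def coalExp [Fintype V] [DecidableEq V] (P : Matrix V V ℝ) : ℝ :=
  ∑' t : ℕ, coalSurvival P t

/-- `E(C²)`, via the tail-sum formula `E(C²) = Σ_{t≥0} P(C > √t)`. -/
def coalMoment2 [Fintype V] [DecidableEq V] (P : Matrix V V ℝ) : ℝ :=
  ∑' t : ℕ, coalSurvival P (Nat.sqrt t)

/-- `μ(w) = pi(w_1) ∏ P(w_j, w_{j+1})`, the stationary measure of the word `w`. -/
def wordProb [Fintype V] (pi : V → ℝ) (P : Matrix V V ℝ) {n : ℕ} (w : Fin (n + 1) → V) : ℝ :=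
  pi (w 0) * ∏ i : Fin n, P (w i.castSucc) (w i.succ)

/-- The state space `V_n` of the `n`-block chain: words of length `n+1` of positive measure. -/
abbrev BlockStates [Fintype V] (pi : V → ℝ) (P : Matrix V V ℝ) (n : ℕ) : Type _ :=
  {w : Fin (n + 1) → V // 0 < wordProb pi P w}

/-- The transition matrix `P_n` of the `n`-block chain. -/
def blockMatrix [Fintype V] [DecidableEq V] (pi : V → ℝ) (P : Matrix V V ℝ) (n : ℕ) :
    Matrix (BlockStates pi P n) (BlockStates pi P n) ℝ :=
  fun u v =>
    if ∀ i : Fin n, u.1 i.succ = v.1 i.castSucc then P (u.1 (Fin.last n)) (v.1 (Fin.last n))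
    else 0

/-- The stationary distribution `π_n` of the `n`-block chain. -/
def blockPi [Fintype V] (pi : V → ℝ) (P : Matrix V V ℝ) (n : ℕ) :
    BlockStates pi P n → ℝ :=
  fun w => wordProb pi P w.1

/-- `Δ_n = Σ_{u ∈ V_n} μ(u)²`. -/
def blockDelta [Fintype V] (pi : V → ℝ) (P : Matrix V V ℝ) (n : ℕ) : ℝ :=
  ∑ w : Fin (n + 1) → V, (wordProb pi P w) ^ 2

/-- The entropy `h(V,P) = -Σ_{u,v} pi(u) P(u,v) log P(u,v)`. -/
def chainEntropy [Fintype V] (P : Matrix V V ℝ) (pi : V → ℝ) : ℝ :=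
  -∑ u, ∑ v, pi u * P u v * Real.log (P u v)

lemma wordProb_snoc [Fintype V] (pi : V → ℝ) (P : Matrix V V ℝ) {n : ℕ}
    (u : Fin (n + 1) → V) (v : V) :
    wordProb pi P (Fin.snoc u v) = wordProb pi P u * P (u (Fin.last n)) v := by
  unfold wordProb
  rw [Fin.prod_univ_castSucc]
  have h0 : (Fin.snoc u v : Fin (n + 2) → V) 0 = u 0 := by
    rw [show (0 : Fin (n + 2)) = Fin.castSucc 0 by simp, Fin.snoc_castSucc]
  have hprod : ∀ i : Fin n,
      P ((Fin.snoc u v : Fin (n + 2) → V) (Fin.castSucc i.castSucc))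
        ((Fin.snoc u v : Fin (n + 2) → V) i.castSucc.succ)
      = P (u i.castSucc) (u i.succ) := by
    intro i
    rw [Fin.succ_castSucc, Fin.snoc_castSucc, Fin.snoc_castSucc]
  have hlast :
      P ((Fin.snoc u v : Fin (n + 2) → V) (Fin.castSucc (Fin.last n)))
        ((Fin.snoc u v : Fin (n + 2) → V) (Fin.last n).succ)
      = P (u (Fin.last n)) v := by
    rw [Fin.succ_last, Fin.snoc_castSucc, Fin.snoc_last]
  rw [h0, hlast, Finset.prod_congr rfl fun i _ => hprod i]
  ring

/-- `lim (1/n) log Δ_n = log λ` where `λ` is the Perron eigenvalue of the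
matrix `Q(u,v) = P(u,v)²` (characterized by having a strictly positive eigenvector)
and `Δ_n = Σ_{u ∈ V_n} μ(u)²` (blocks of length `n+1`). -/
theorem blockDelta_limit [Fintype V] [DecidableEq V] (P : Matrix V V ℝ)
    (hP : IsStochastic P) (hmix : IsMixing P) (pi : V → ℝ) (hpi : IsStationaryVec P pi)
    (lam : ℝ) (φ : V → ℝ) (hφ : ∀ v, 0 < φ v)
    (heig : ∀ u, ∑ v, (P u v) ^ 2 * φ v = lam * φ u) :
    Tendsto (fun n : ℕ => Real.log (blockDelta pi P n) / ((n : ℝ) + 1)) atTop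
      (nhds (Real.log lam)) := by
  classical
  -- the weighted sums A n
  set A : ℕ → ℝ := fun n =>
    ∑ w : Fin (n + 1) → V, (wordProb pi P w) ^ 2 * φ (w (Fin.last n)) with hAdef
  -- recursion A (n+1) = lam * A n
  have hArec : ∀ n, A (n + 1) = lam * A n := by
    intro n
    have hsum :
        ∑ p : V × (Fin (n + 1) → V),
            (wordProb pi P (Fin.snoc p.2 p.1 : Fin (n + 2) → V)) ^ 2 *
              φ ((Fin.snoc p.2 p.1 : Fin (n + 2) → V) (Fin.last (n + 1)))
          = ∑ w : Fin (n + 2) → V, (wordProb pi P w) ^ 2 * φ (w (Fin.last (n + 1))) := by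
      exact Fintype.sum_equiv (Fin.snocEquiv fun _ => V) _ _ (fun p => rfl)
    have : A (n + 1)
        = ∑ u : Fin (n + 1) → V, ∑ v : V,
            (wordProb pi P u) ^ 2 * ((P (u (Fin.last n)) v) ^ 2 * φ v) := by
      simp only [hAdef]
      rw [← hsum, Fintype.sum_prod_type, Finset.sum_comm]
      refine Finset.sum_congr rfl fun u _ => Finset.sum_congr rfl fun v _ => ?_
      rw [wordProb_snoc, Fin.snoc_last]
      ring
    rw [this]
    simp only [hAdef]
    rw [Finset.mul_sum]
    refine Finset.sum_congr rfl fun u _ => ?_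
    rw [← Finset.mul_sum, heig]
    ring
  have hA : ∀ n, A n = lam ^ n * A 0 := by
    intro n
    induction n with
    | zero => simp
    | succ k ih => rw [hArec, ih, pow_succ]; ring
  -- a state of positive stationary probability
  obtain ⟨u₀, hu₀⟩ : ∃ u, 0 < pi u := by
    by_contra h
    push_neg at h
    have h1 : ∑ v, pi v ≤ 0 := Finset.sum_nonpos fun v _ => h v
    linarith [hpi.2.1]
  have hne : Nonempty V := ⟨u₀⟩
  -- lam > 0
  have hlam : 0 < lam := by
    obtain ⟨v₀, hv₀⟩ : ∃ v, 0 < P u₀ v := by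
      by_contra h
      push_neg at h
      have h1 : ∑ v, P u₀ v ≤ 0 := Finset.sum_nonpos fun v _ => h v
      linarith [hP.2 u₀]
    have h1 : 0 < ∑ v, (P u₀ v) ^ 2 * φ v :=
      Finset.sum_pos' (fun w _ => mul_nonneg (sq_nonneg _) (hφ w).le)
        ⟨v₀, Finset.mem_univ v₀, mul_pos (pow_pos hv₀ 2) (hφ v₀)⟩
    rw [heig u₀] at h1
    nlinarith [hφ u₀]
  -- min and max of φ
  have huniv : (Finset.univ : Finset V).Nonempty := Finset.univ_nonempty
  set m : ℝ := Finset.univ.inf' huniv φ with hm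
  set M : ℝ := Finset.univ.sup' huniv φ with hM
  have hmle : ∀ v, m ≤ φ v := fun v => Finset.inf'_le _ (Finset.mem_univ v)
  have hleM : ∀ v, φ v ≤ M := fun v => Finset.le_sup' _ (Finset.mem_univ v)
  have hmpos : 0 < m := by
    rw [hm, Finset.lt_inf'_iff]
    exact fun v _ => hφ v
  have hMpos : 0 < M := lt_of_lt_of_le hmpos (le_trans (hmle (Classical.arbitrary V)) (hleM _))
  -- A 0 > 0
  have hA0 : 0 < A 0 := by
    refine Finset.sum_pos' (fun w _ => mul_nonneg (sq_nonneg _) (hφ _).le)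
      ⟨(fun _ => u₀), Finset.mem_univ _, ?_⟩
    have : wordProb pi P (fun _ : Fin 1 => u₀) = pi u₀ := by
      simp [wordProb]
    rw [this]
    exact mul_pos (pow_pos hu₀ 2) (hφ _)
  have hAn : ∀ n, 0 < A n := fun n => by
    rw [hA n]; exact mul_pos (pow_pos hlam n) hA0
  -- bounds m Δ ≤ A ≤ M Δ
  have hlow : ∀ n, m * blockDelta pi P n ≤ A n := by
    intro n
    simp only [hAdef, blockDelta]
    rw [Finset.mul_sum]
    refine Finset.sum_le_sum fun w _ => ?_
    rw [mul_comm]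
    exact mul_le_mul_of_nonneg_left (hmle _) (sq_nonneg _)
  have hhigh : ∀ n, A n ≤ M * blockDelta pi P n := by
    intro n
    simp only [hAdef, blockDelta]
    rw [Finset.mul_sum]
    refine Finset.sum_le_sum fun w _ => ?_
    rw [mul_comm M]
    exact mul_le_mul_of_nonneg_left (hleM _) (sq_nonneg _)
  have hΔpos : ∀ n, 0 < blockDelta pi P n := by
    intro n
    have := lt_of_lt_of_le (hAn n) (hhigh n)
    nlinarith [hMpos]
  -- log bounds
  have hc1 : 0 < A 0 / M := div_pos hA0 hMpos
  have hc2 : 0 < A 0 / m := div_pos hA0 hmpos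
  have hlogbound : ∀ n : ℕ,
      (n : ℝ) * Real.log lam + Real.log (A 0 / M) ≤ Real.log (blockDelta pi P n) ∧
      Real.log (blockDelta pi P n) ≤ (n : ℝ) * Real.log lam + Real.log (A 0 / m) := by
    intro n
    have h1 : lam ^ n * (A 0 / M) ≤ blockDelta pi P n := by
      have h := hhigh n
      rw [hA n] at h
      rw [← mul_div_assoc, div_le_iff₀ hMpos]
      linarith [mul_comm M (blockDelta pi P n)]
    have h2 : blockDelta pi P n ≤ lam ^ n * (A 0 / m) := by
      have h := hlow n
      rw [hA n] at h
      rw [← mul_div_assoc, le_div_iff₀ hmpos]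
      linarith [mul_comm m (blockDelta pi P n)]
    have hx1 : 0 < lam ^ n * (A 0 / M) := mul_pos (pow_pos hlam n) hc1
    constructor
    · calc (n : ℝ) * Real.log lam + Real.log (A 0 / M)
          = Real.log (lam ^ n * (A 0 / M)) := by
            rw [Real.log_mul (pow_pos hlam n).ne' hc1.ne', Real.log_pow]
        _ ≤ Real.log (blockDelta pi P n) := Real.log_le_log hx1 h1
    · calc Real.log (blockDelta pi P n)
          ≤ Real.log (lam ^ n * (A 0 / m)) := Real.log_le_log (hΔpos n) h2
        _ = (n : ℝ) * Real.log lam + Real.log (A 0 / m) := by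
            rw [Real.log_mul (pow_pos hlam n).ne' hc2.ne', Real.log_pow]
  -- the squeeze
  have hdenom : ∀ n : ℕ, (0 : ℝ) < (n : ℝ) + 1 := fun n => by positivity
  have hatTop : Tendsto (fun n : ℕ => (n : ℝ) + 1) atTop atTop :=
    tendsto_atTop_add_const_right _ 1 tendsto_natCast_atTop_atTop
  have htend : ∀ c : ℝ, Tendsto
      (fun n : ℕ => ((n : ℝ) * Real.log lam + c) / ((n : ℝ) + 1)) atTop
      (nhds (Real.log lam)) := by
    intro c
    have heq : ∀ n : ℕ, ((n : ℝ) * Real.log lam + c) / ((n : ℝ) + 1)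
        = Real.log lam + (c - Real.log lam) / ((n : ℝ) + 1) := by
      intro n
      field_simp
      ring
    simp_rw [heq]
    have h0 : Tendsto (fun n : ℕ => (c - Real.log lam) / ((n : ℝ) + 1)) atTop (nhds 0) :=
      tendsto_const_nhds.div_atTop hatTop
    have := tendsto_const_nhds.add h0 (f := fun _ : ℕ => Real.log lam) (x := atTop)
    simpa using this
  refine tendsto_of_tendsto_of_tendsto_of_le_of_le
    (htend (Real.log (A 0 / M))) (htend (Real.log (A 0 / m))) ?_ ?_
  · intro n
    exact div_le_div_of_nonneg_right (hlogbound n).1 (hdenom n).le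
  · intro n
    exact div_le_div_of_nonneg_right (hlogbound n).2 (hdenom n).le
end
end

section
/- Let (V,P) be a mixing Markov chain with entropy h(V,P) = −Σ_{u,v} π(u)·P(u,v)·log P(u,v) and L(V,P) = −log λ, λ the Perron eigenvalue of Q(u,v) = P(u,v)². Then 0 ≤ L(V,P) ≤ h(V,P). -/
open Finset Filter
open scoped ENNReal

noncomputable section

variable {V : Type*}

/-- `pi` is a stationary distribution for `P`. -/
def IsStationaryChain [Fintype V] (P : Matrix V V ℝ) (pi : V → ℝ) : Prop :=
  (∀ v, 0 ≤ pi v) ∧ (∑ v, pi v = 1) ∧ ∀ v, ∑ u, pi u * P u v = pi v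

/-- `0 ≤ L(V,P) ≤ h(V,P)`, where `L(V,P) = -log λ`, `λ` the Perron eigenvalue of
`Q(u,v) = P(u,v)²`, and `h(V,P) = -Σ_{u,v} π(u) P(u,v) log P(u,v)`. -/
theorem L_between_zero_and_entropy [Fintype V] [DecidableEq V] (P : Matrix V V ℝ)
    (hP : IsStochastic P) (hmix : IsMixing P) (pi : V → ℝ) (hpi : IsStationaryChain P pi)
    (lam : ℝ) (φ : V → ℝ) (hφ : ∀ v, 0 < φ v)
    (heig : ∀ u, ∑ v, (P u v) ^ 2 * φ v = lam * φ u) :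
    0 ≤ -Real.log lam ∧ -Real.log lam ≤ chainEntropy P pi := by
  have hne : Nonempty V := by
    rcases isEmpty_or_nonempty V with h | h
    · exfalso; have := hpi.2.1; simp at this
    · exact h
  obtain ⟨u₀⟩ := hne
  -- lam > 0
  have hlam0 : 0 < lam := by
    have h1 : ∑ v, P u₀ v = 1 := hP.2 u₀
    have hex : ∃ v, 0 < P u₀ v := by
      by_contra hc
      push_neg at hc
      have : ∑ v, P u₀ v = 0 := Finset.sum_eq_zero fun v _ => le_antisymm (hc v) (hP.1 u₀ v)
      rw [this] at h1; norm_num at h1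
    obtain ⟨v₀, hv₀⟩ := hex
    have hpos : 0 < ∑ v, (P u₀ v) ^ 2 * φ v := by
      apply Finset.sum_pos' (fun v _ => mul_nonneg (sq_nonneg _) (hφ v).le)
      exact ⟨v₀, Finset.mem_univ _, mul_pos (pow_pos hv₀ 2) (hφ v₀)⟩
    rw [heig u₀] at hpos
    nlinarith [hφ u₀]
  -- lam ≤ 1
  have hlam1 : lam ≤ 1 := by
    obtain ⟨um, _, hum⟩ := Finset.exists_max_image Finset.univ φ ⟨u₀, Finset.mem_univ _⟩
    have hPle1 : ∀ v, P um v ≤ 1 := by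
      intro v
      calc P um v ≤ ∑ w, P um w :=
            Finset.single_le_sum (fun w _ => hP.1 um w) (Finset.mem_univ v)
        _ = 1 := hP.2 um
    have hle : lam * φ um ≤ φ um := by
      rw [← heig um]
      calc ∑ v, (P um v) ^ 2 * φ v ≤ ∑ v, P um v * φ um := by
            apply Finset.sum_le_sum
            intro v _
            have h1 : (P um v) ^ 2 ≤ P um v := by
              nlinarith [hP.1 um v, hPle1 v]
            have h2 : φ v ≤ φ um := hum v (Finset.mem_univ v)
            nlinarith [hP.1 um v, (hφ v).le, sq_nonneg (P um v)]
        _ = (∑ v, P um v) * φ um := by rw [Finset.sum_mul]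
        _ = φ um := by rw [hP.2 um, one_mul]
    exact le_of_mul_le_mul_right (by linarith [hle]) (hφ um)
  refine ⟨by simpa using Real.log_nonpos hlam0.le hlam1, ?_⟩
  -- Jensen per row
  have key : ∀ u, (∑ v, P u v * Real.log (P u v)) + (∑ v, P u v * Real.log (φ v))
      ≤ Real.log lam + Real.log (φ u) := by
    intro u
    set S : Finset V := Finset.univ.filter (fun v => P u v ≠ 0) with hS
    have hw0 : ∀ v ∈ S, (0:ℝ) ≤ P u v := fun v _ => hP.1 u v
    have hw1 : ∑ v ∈ S, P u v = 1 := by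
      rw [hS, Finset.sum_filter_ne_zero]; exact hP.2 u
    have hmem : ∀ v ∈ S, P u v * φ v ∈ Set.Ioi (0:ℝ) := by
      intro v hv
      have : P u v ≠ 0 := (Finset.mem_filter.mp hv).2
      have hPpos : 0 < P u v := lt_of_le_of_ne (hP.1 u v) (Ne.symm this)
      exact Set.mem_Ioi.mpr (mul_pos hPpos (hφ v))
    have hjen := (strictConcaveOn_log_Ioi.concaveOn).le_map_sum hw0 hw1 hmem
    simp only [smul_eq_mul] at hjen
    have hsum : ∑ v ∈ S, P u v * (P u v * φ v) = lam * φ u := by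
      rw [← heig u]
      rw [hS, Finset.sum_filter_of_ne (by intro v _ h hc; simp [hc] at h)]
      exact Finset.sum_congr rfl fun v _ => by ring
    rw [hsum, Real.log_mul hlam0.ne' (hφ u).ne'] at hjen
    calc (∑ v, P u v * Real.log (P u v)) + (∑ v, P u v * Real.log (φ v))
        = ∑ v ∈ S, (P u v * Real.log (P u v) + P u v * Real.log (φ v)) := by
          rw [← Finset.sum_add_distrib]
          rw [hS, Finset.sum_filter_of_ne (by intro v _ h hc; simp [hc] at h)]
      _ = ∑ v ∈ S, P u v * Real.log (P u v * φ v) := by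
          apply Finset.sum_congr rfl
          intro v hv
          have hPpos : (0:ℝ) < P u v :=
            lt_of_le_of_ne (hP.1 u v) (Ne.symm (Finset.mem_filter.mp hv).2)
          rw [Real.log_mul hPpos.ne' (hφ v).ne']; ring
      _ ≤ Real.log lam + Real.log (φ u) := hjen
  -- sum against pi
  have hπ0 : ∀ u, 0 ≤ pi u := hpi.1
  have hmain : ∑ u, pi u * ((∑ v, P u v * Real.log (P u v)) + (∑ v, P u v * Real.log (φ v)))
      ≤ ∑ u, pi u * (Real.log lam + Real.log (φ u)) :=
    Finset.sum_le_sum fun u _ => mul_le_mul_of_nonneg_left (key u) (hπ0 u)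
  have hL : ∑ u, pi u * ((∑ v, P u v * Real.log (P u v)) + (∑ v, P u v * Real.log (φ v)))
      = (∑ u, ∑ v, pi u * P u v * Real.log (P u v)) + ∑ v, pi v * Real.log (φ v) := by
    have hswap : ∑ u, ∑ v, pi u * (P u v * Real.log (φ v)) = ∑ v, pi v * Real.log (φ v) := by
      rw [Finset.sum_comm]
      apply Finset.sum_congr rfl
      intro v _
      calc ∑ u, pi u * (P u v * Real.log (φ v))
          = (∑ u, pi u * P u v) * Real.log (φ v) := by
            rw [Finset.sum_mul]; exact Finset.sum_congr rfl fun u _ => by ring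
        _ = pi v * Real.log (φ v) := by rw [hpi.2.2 v]
    calc ∑ u, pi u * ((∑ v, P u v * Real.log (P u v)) + (∑ v, P u v * Real.log (φ v)))
        = (∑ u, ∑ v, pi u * (P u v * Real.log (P u v)))
            + ∑ u, ∑ v, pi u * (P u v * Real.log (φ v)) := by
          rw [← Finset.sum_add_distrib]
          exact Finset.sum_congr rfl fun u _ => by
            rw [mul_add, Finset.mul_sum, Finset.mul_sum]
      _ = (∑ u, ∑ v, pi u * P u v * Real.log (P u v)) + ∑ v, pi v * Real.log (φ v) := by
          rw [hswap]
          congr 1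
          exact Finset.sum_congr rfl fun u _ => Finset.sum_congr rfl fun v _ => by ring
  have hR : ∑ u, pi u * (Real.log lam + Real.log (φ u))
      = Real.log lam + ∑ u, pi u * Real.log (φ u) := by
    rw [Finset.sum_congr rfl fun u _ => mul_add (pi u) _ _, Finset.sum_add_distrib,
      ← Finset.sum_mul, hpi.2.1, one_mul]
  rw [hL, hR] at hmain
  have : ∑ u, ∑ v, pi u * P u v * Real.log (P u v) ≤ Real.log lam := by linarith
  unfold chainEntropy
  linarith
end
end

section
/- Let (V,P) be a mixing Markov chain. Then L(V,P) > 0 if and only if |V| > 1. In particular, if |V| > 1 there exists δ > 0 such that for all sufficiently large n, Δ_n = Σ_{u ∈ V_n} μ(u)² ≤ e^{−δn}. -/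
open Finset Filter
open scoped ENNReal

noncomputable section

variable {V : Type*}

/-- `pi` is a stationary distribution for `P`. -/
def IsStationaryDist [Fintype V] (P : Matrix V V ℝ) (pi : V → ℝ) : Prop :=
  (∀ v, 0 ≤ pi v) ∧ (∑ v, pi v = 1) ∧ ∀ v, ∑ u, pi u * P u v = pi v

private lemma path_sum' [Fintype V] [DecidableEq V] (Q : Matrix V V ℝ) (φ : V → ℝ) (lam : ℝ)
    (heig : ∀ u, ∑ v, Q u v * φ v = lam * φ u) :
    ∀ (n : ℕ) (c : V → ℝ),
      ∑ w : Fin (n + 1) → V,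
        c (w 0) * (∏ i : Fin n, Q (w i.castSucc) (w i.succ)) * φ (w (Fin.last n))
        = lam ^ n * ∑ u, c u * φ u := by
  intro n
  induction n with
  | zero =>
      intro c
      rw [← Equiv.sum_comp (Equiv.funUnique (Fin 1) V).symm]
      simp
  | succ n ih =>
      intro c
      rw [← Equiv.sum_comp (Fin.consEquiv fun _ : Fin (n + 2) => V), Fintype.sum_prod_type]
      have hred : ∀ (x : V) (w : Fin (n + 1) → V),
          (Fin.cons x w : Fin (n + 2) → V) 0
              = x ∧
            (Fin.cons x w : Fin (n + 2) → V) (Fin.last (n + 1)) = w (Fin.last n) ∧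
            (∏ i : Fin (n + 1), Q ((Fin.cons x w : Fin (n + 2) → V) i.castSucc)
                ((Fin.cons x w : Fin (n + 2) → V) i.succ))
              = Q x (w 0) * ∏ i : Fin n, Q (w i.castSucc) (w i.succ) := by
        intro x w
        refine ⟨rfl, by rw [← Fin.succ_last, Fin.cons_succ], ?_⟩
        rw [Fin.prod_univ_succ, Fin.castSucc_zero, Fin.cons_zero, Fin.cons_succ]
        congr 1
      calc ∑ x, ∑ w : Fin (n + 1) → V,
            c ((Fin.consEquiv fun _ : Fin (n + 2) => V) (x, w) 0) *
              (∏ i : Fin (n + 1), Q ((Fin.consEquiv fun _ : Fin (n + 2) => V) (x, w) i.castSucc)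
                ((Fin.consEquiv fun _ : Fin (n + 2) => V) (x, w) i.succ)) *
              φ ((Fin.consEquiv fun _ : Fin (n + 2) => V) (x, w) (Fin.last (n + 1)))
          = ∑ w : Fin (n + 1) → V, (∑ x, c x * Q x (w 0)) *
              (∏ i : Fin n, Q (w i.castSucc) (w i.succ)) * φ (w (Fin.last n)) := by
            rw [Finset.sum_comm]
            refine Finset.sum_congr rfl fun w _ => ?_
            rw [Finset.sum_mul, Finset.sum_mul]
            refine Finset.sum_congr rfl fun x _ => ?_
            simp only [Fin.consEquiv_apply]
            rw [(hred x w).1, (hred x w).2.1, (hred x w).2.2]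
            ring
        _ = lam ^ n * ∑ u, (∑ x, c x * Q x u) * φ u := ih (fun v => ∑ x, c x * Q x v)
        _ = lam ^ (n + 1) * ∑ u, c u * φ u := by
            have h2 : ∑ u, (∑ x, c x * Q x u) * φ u = lam * ∑ u, c u * φ u := by
              simp_rw [Finset.sum_mul]
              rw [Finset.sum_comm]
              rw [Finset.mul_sum]
              refine Finset.sum_congr rfl fun x _ => ?_
              calc ∑ u, c x * Q x u * φ u = c x * ∑ u, Q x u * φ u := by
                    rw [Finset.mul_sum]; exact Finset.sum_congr rfl fun u _ => by ring
                _ = lam * (c x * φ x) := by rw [heig]; ring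
            rw [h2]; ring

/-- `L(V,P) > 0` iff `|V| > 1`; and if `|V| > 1` then there is `δ > 0` with
`Δ_n ≤ e^{-δn}` for all sufficiently large `n` (blocks of length `n+1`). -/
theorem L_positive_iff_nontrivial [Fintype V] [DecidableEq V] (P : Matrix V V ℝ)
    (hP : IsStochastic P) (hmix : IsMixing P) (pi : V → ℝ) (hpi : IsStationaryDist P pi)
    (lam : ℝ) (φ : V → ℝ) (hφ : ∀ v, 0 < φ v)
    (heig : ∀ u, ∑ v, (P u v) ^ 2 * φ v = lam * φ u) :
    (0 < -Real.log lam ↔ 1 < Fintype.card V) ∧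
      (1 < Fintype.card V → ∃ δ > (0 : ℝ), ∃ N : ℕ, ∀ n ≥ N,
        blockDelta pi P n ≤ Real.exp (-δ * ((n : ℝ) + 1))) := by

  obtain ⟨hPnn, hPsum⟩ := hP
  have hne : Nonempty V := by
    rcases isEmpty_or_nonempty V with h | h
    · exfalso; have := hpi.2.1; simp at this
    · exact h
  have hP1 : ∀ u v, P u v ≤ 1 := by
    intro u v
    calc P u v ≤ ∑ v', P u v' := Finset.single_le_sum (fun i _ => hPnn u i) (Finset.mem_univ v)
      _ = 1 := hPsum u
  have hlampos : 0 < lam := by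
    obtain ⟨u⟩ := hne
    obtain ⟨v0, hv0⟩ : ∃ v, 0 < P u v := by
      by_contra h
      push_neg at h
      have h0 : ∑ v, P u v = 0 := Finset.sum_eq_zero fun v _ => le_antisymm (h v) (hPnn u v)
      rw [hPsum u] at h0; norm_num at h0
    have h1 : 0 < ∑ v, P u v ^ 2 * φ v := by
      have hle : P u v0 ^ 2 * φ v0 ≤ ∑ v, P u v ^ 2 * φ v :=
        Finset.single_le_sum (f := fun v => P u v ^ 2 * φ v)
          (fun i _ => mul_nonneg (sq_nonneg _) (hφ i).le) (Finset.mem_univ v0)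
      have h2 : 0 < P u v0 ^ 2 * φ v0 := mul_pos (pow_pos hv0 2) (hφ v0)
      linarith
    rw [heig u] at h1
    rcases mul_pos_iff.mp h1 with ⟨h, _⟩ | ⟨_, h⟩
    · exact h
    · exact absurd (hφ u) (by linarith)
  obtain ⟨uM, _, huM⟩ :=
    Finset.exists_max_image (Finset.univ : Finset V) φ ⟨hne.some, Finset.mem_univ _⟩
  have huM' : ∀ v, φ v ≤ φ uM := fun v => huM v (Finset.mem_univ v)
  have hterm : ∀ w v, φ w = φ uM → P w v ^ 2 * φ v ≤ P w v * φ w := by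
    intro w v hw
    have h0 := hPnn w v; have h1 := hP1 w v; have h2 := hφ v
    have h3 : φ v ≤ φ w := hw ▸ huM' v
    nlinarith [mul_nonneg (sub_nonneg.mpr h1) (mul_nonneg h0 h2.le),
      mul_nonneg h0 (sub_nonneg.mpr h3)]
  have hlamle : lam ≤ 1 := by
    have hle : ∑ v, P uM v ^ 2 * φ v ≤ ∑ v, P uM v * φ uM :=
      Finset.sum_le_sum fun v _ => hterm uM v rfl
    rw [heig uM, ← Finset.sum_mul, hPsum uM, one_mul] at hle
    have := hφ uM
    nlinarith
  have hlamlt : 1 < Fintype.card V → lam < 1 := by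
    intro hcard
    rcases lt_or_eq_of_le hlamle with h | h
    · exact h
    exfalso
    have onestep : ∀ w, φ uM ≤ φ w → ∃ w', φ uM ≤ φ w' ∧ ∀ v, v ≠ w' → P w v = 0 := by
      intro w hw
      have hww : φ w = φ uM := le_antisymm (huM' w) hw
      have hzero : ∀ v ∈ Finset.univ, P w v * φ w - P w v ^ 2 * φ v = 0 := by
        refine (Finset.sum_eq_zero_iff_of_nonneg
          (fun v _ => sub_nonneg.mpr (hterm w v hww))).mp ?_
        rw [Finset.sum_sub_distrib, ← Finset.sum_mul, hPsum w, heig w, ← h]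
        ring
      obtain ⟨v0, hv0⟩ : ∃ v, 0 < P w v := by
        by_contra hcon
        push_neg at hcon
        have h0 : ∑ v, P w v = 0 := Finset.sum_eq_zero fun v _ => le_antisymm (hcon v) (hPnn w v)
        rw [hPsum w] at h0; norm_num at h0
      have he := hzero v0 (Finset.mem_univ v0)
      have he2 : φ w = P w v0 * φ v0 :=
        mul_left_cancel₀ (ne_of_gt hv0) (by linear_combination he)
      have hφv0 : φ v0 = φ w := by
        have h1 : φ w ≤ φ v0 := by nlinarith [hP1 w v0, hφ v0]
        have h2 : φ v0 ≤ φ w := hww ▸ huM' v0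
        linarith
      have hPv0 : P w v0 = 1 := by
        rw [hφv0] at he2
        exact mul_right_cancel₀ (ne_of_gt (hφ w)) (by linarith : P w v0 * φ w = 1 * φ w)
      refine ⟨v0, by rw [hφv0, hww], ?_⟩
      intro v hv
      have hsum0 : ∑ v ∈ Finset.univ.erase v0, P w v = 0 := by
        have h5 := Finset.sum_erase_add Finset.univ (P w) (Finset.mem_univ v0)
        rw [hPsum w, hPv0] at h5
        linarith
      exact (Finset.sum_eq_zero_iff_of_nonneg (fun v _ => hPnn w v)).mp hsum0 v
        (Finset.mem_erase.mpr ⟨hv, Finset.mem_univ v⟩)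
    have pm : ∀ n : ℕ, ∃ w, φ uM ≤ φ w ∧ ∀ v, v ≠ w → (P ^ n) uM v = 0 := by
      intro n
      induction n with
      | zero =>
          exact ⟨uM, le_refl _, fun v hv => by
            rw [pow_zero]; exact Matrix.one_apply_ne (Ne.symm hv)⟩
      | succ n ihn =>
          obtain ⟨w, hw, hw0⟩ := ihn
          obtain ⟨w', hw', hw'0⟩ := onestep w hw
          refine ⟨w', hw', fun v hv => ?_⟩
          rw [pow_succ, Matrix.mul_apply]
          refine Finset.sum_eq_zero fun z _ => ?_
          by_cases hz : z = w
          · subst hz; rw [hw'0 v hv, mul_zero]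
          · rw [hw0 z hz, zero_mul]
    obtain ⟨m, hm0, hmpos⟩ := hmix
    obtain ⟨w, _, hw0⟩ := pm m
    obtain ⟨v, hv⟩ := Fintype.exists_ne_of_one_lt_card hcard w
    exact absurd (hw0 v hv) (ne_of_gt (hmpos uM v))
  constructor
  · constructor
    · intro hL
      by_contra hc
      push_neg at hc
      have hcV : Fintype.card V = 1 := le_antisymm hc (Fintype.card_pos_iff.mpr hne)
      obtain ⟨x, hx⟩ := Fintype.card_eq_one_iff.mp hcV
      have hsum : ∀ f : V → ℝ, ∑ v, f v = f x := by
        intro f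
        rw [show ∑ v, f v = ∑ _v : V, f x from Finset.sum_congr rfl fun v _ => by rw [hx v]]
        rw [Finset.sum_const, Finset.card_univ, hcV, one_smul]
      have hPxx : P x x = 1 := by have h6 := hPsum x; rwa [hsum] at h6
      have h7 := heig x
      rw [hsum, hPxx] at h7
      have hlam1 : lam = 1 :=
        (mul_right_cancel₀ (ne_of_gt (hφ x)) (by nlinarith : lam * φ x = 1 * φ x)).symm ▸ rfl
      rw [hlam1, Real.log_one] at hL
      norm_num at hL
    · intro hcard
      have h1 := hlamlt hcard
      have h2 := Real.log_neg hlampos h1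
      linarith
  · intro hcard
    have hlt := hlamlt hcard
    obtain ⟨um, _, hum⟩ :=
      Finset.exists_min_image (Finset.univ : Finset V) φ ⟨hne.some, Finset.mem_univ _⟩
    have hum' : ∀ v, φ um ≤ φ v := fun v => hum v (Finset.mem_univ v)
    set C : ℝ := φ uM / φ um with hC
    have hCpos : 0 < C := div_pos (hφ uM) (hφ um)
    have hDelta : ∀ n, blockDelta pi P n ≤ C * lam ^ n := by
      intro n
      have key := path_sum' (fun u v => P u v ^ 2) φ lam heig n (fun u => pi u ^ 2)
      have hpinn := hpi.1
      have hpisum := hpi.2.1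
      have hpile : ∀ u, pi u ≤ 1 := by
        intro u
        calc pi u ≤ ∑ v, pi v := Finset.single_le_sum (fun i _ => hpinn i) (Finset.mem_univ u)
          _ = 1 := hpisum
      have h1 : φ um * blockDelta pi P n ≤ lam ^ n * ∑ u, pi u ^ 2 * φ u := by
        rw [← key, blockDelta, Finset.mul_sum]
        refine Finset.sum_le_sum fun w _ => ?_
        rw [wordProb, mul_pow, ← Finset.prod_pow]
        have hprod : 0 ≤ ∏ i : Fin n, P (w i.castSucc) (w i.succ) ^ 2 :=
          Finset.prod_nonneg fun i _ => sq_nonneg _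
        have h8 := hum' (w (Fin.last n))
        nlinarith [mul_nonneg (sq_nonneg (pi (w 0))) hprod]
      have h2 : ∑ u, pi u ^ 2 * φ u ≤ φ uM := by
        calc ∑ u, pi u ^ 2 * φ u ≤ ∑ u, pi u * φ uM := by
              refine Finset.sum_le_sum fun u _ => ?_
              have h3 := hpinn u; have h4 := hpile u; have h5 := huM' u; have h6 := hφ u
              nlinarith [mul_nonneg (sub_nonneg.mpr h4) (mul_nonneg h3 h6.le),
                mul_nonneg h3 (sub_nonneg.mpr h5)]
          _ = φ uM := by rw [← Finset.sum_mul, hpisum, one_mul]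
      have hφum := hφ um
      have hlamn : (0:ℝ) ≤ lam ^ n := pow_nonneg hlampos.le n
      rw [hC, div_mul_eq_mul_div, le_div_iff₀ hφum]
      calc blockDelta pi P n * φ um = φ um * blockDelta pi P n := by ring
        _ ≤ lam ^ n * ∑ u, pi u ^ 2 * φ u := h1
        _ ≤ lam ^ n * φ uM := mul_le_mul_of_nonneg_left h2 hlamn
        _ = φ uM * lam ^ n := by ring
    set δ : ℝ := -Real.log lam / 2 with hδ
    have hδpos : 0 < δ := by
      have h9 := Real.log_neg hlampos hlt
      rw [hδ]; linarith
    refine ⟨δ, hδpos, ⌈Real.log C / δ⌉₊ + 1, fun n hn => ?_⟩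
    have hlogC : Real.log C ≤ δ * ((n : ℝ) - 1) := by
      have h1 : Real.log C / δ ≤ (⌈Real.log C / δ⌉₊ : ℝ) := Nat.le_ceil _
      have h2 : ((⌈Real.log C / δ⌉₊ + 1 : ℕ) : ℝ) ≤ (n : ℝ) := Nat.cast_le.mpr hn
      push_cast at h2
      have h3 : Real.log C / δ ≤ (n : ℝ) - 1 := by linarith
      calc Real.log C = (Real.log C / δ) * δ := by field_simp
        _ ≤ ((n : ℝ) - 1) * δ := mul_le_mul_of_nonneg_right h3 hδpos.le
        _ = δ * ((n : ℝ) - 1) := by ring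
    have hCle : C ≤ Real.exp (δ * ((n : ℝ) - 1)) := by
      rw [← Real.exp_log hCpos]
      exact Real.exp_le_exp.mpr hlogC
    have hlamexp : lam ^ n = Real.exp ((n : ℝ) * Real.log lam) := by
      conv_lhs => rw [← Real.exp_log hlampos]
      rw [← Real.exp_nat_mul]
    calc blockDelta pi P n ≤ C * lam ^ n := hDelta n
      _ ≤ Real.exp (δ * ((n : ℝ) - 1)) * lam ^ n :=
          mul_le_mul_of_nonneg_right hCle (pow_nonneg hlampos.le n)
      _ = Real.exp (-δ * ((n : ℝ) + 1)) := by
          rw [hlamexp, ← Real.exp_add]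
          congr 1
          have hlog : Real.log lam = -2 * δ := by rw [hδ]; ring
          rw [hlog]; ring
end
end

section
/- Let (V,P) be a mixing Markov chain whose Markov measure μ is the measure of maximal entropy on its support X. Then L(V,P) = h(V,P), i.e., the Perron eigenvalue λ of Q(u,v) = P(u,v)² satisfies −log λ = h(μ). -/
open Finset Filter
open scoped ENNReal

noncomputable section

variable {V : Type*}

/-- `pi` is a stationary distribution for `P`. -/
def IsStationaryDistrib [Fintype V] (P : Matrix V V ℝ) (pi : V → ℝ) : Prop :=
  (∀ v, 0 ≤ pi v) ∧ (∑ v, pi v = 1) ∧ ∀ v, ∑ u, pi u * P u v = pi v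

section AuxiliaryLemmas
set_option linter.unusedSectionVars false

private lemma jensen_log {V : Type*} [Fintype V] (w g : V → ℝ) (hw : ∀ v, 0 ≤ w v)
    (hw1 : ∑ v, w v = 1) (hg : ∀ v, w v ≠ 0 → 0 < g v) :
    (∑ v, w v * Real.log (g v)) ≤ Real.log (∑ v, w v * g v) ∧
    ((∑ v, w v * Real.log (g v)) = Real.log (∑ v, w v * g v) →
      ∀ v, w v ≠ 0 → g v = ∑ v', w v' * g v') := by
  set S := ∑ v, w v * g v with hS
  have hterm : ∀ v, 0 ≤ w v * g v := by
    intro v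
    rcases eq_or_ne (w v) 0 with h | h
    · simp [h]
    · exact le_of_lt (mul_pos ((hw v).lt_of_ne (Ne.symm h)) (hg v h))
  have hex : ∃ v, w v ≠ 0 := by
    by_contra hc
    push_neg at hc
    simp [hc] at hw1
  obtain ⟨v₀, hv₀⟩ := hex
  have hSpos : 0 < S := by
    have h1 : w v₀ * g v₀ ≤ S := Finset.single_le_sum (fun v _ => hterm v) (mem_univ v₀)
    exact lt_of_lt_of_le (mul_pos ((hw v₀).lt_of_ne (Ne.symm hv₀)) (hg v₀ hv₀)) h1
  have key : ∀ v, 0 ≤ w v * (g v / S - 1) - w v * (Real.log (g v) - Real.log S) := by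
    intro v
    rcases eq_or_ne (w v) 0 with h | h
    · simp [h]
    · have hgv := hg v h
      have hlog : Real.log (g v) - Real.log S = Real.log (g v / S) :=
        (Real.log_div (ne_of_gt hgv) (ne_of_gt hSpos)).symm
      rw [hlog]
      have := Real.log_le_sub_one_of_pos (div_pos hgv hSpos)
      have hwv : 0 < w v := (hw v).lt_of_ne (Ne.symm h)
      nlinarith
  have hsum0 : ∑ v, w v * (g v / S - 1) = 0 := by
    have he : ∀ v ∈ Finset.univ, w v * (g v / S - 1) = w v * g v / S - w v :=
      fun v _ => by ring
    rw [Finset.sum_congr rfl he, Finset.sum_sub_distrib, ← Finset.sum_div, hw1, ← hS,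
      div_self (ne_of_gt hSpos)]
    ring
  have hsumkey : ∑ v, (w v * (g v / S - 1) - w v * (Real.log (g v) - Real.log S))
      = Real.log S - ∑ v, w v * Real.log (g v) := by
    rw [Finset.sum_sub_distrib, hsum0]
    have he : ∀ v ∈ Finset.univ, w v * (Real.log (g v) - Real.log S)
        = w v * Real.log (g v) - w v * Real.log S := fun v _ => by ring
    have h2 : ∑ v, w v * Real.log S = Real.log S := by
      rw [← Finset.sum_mul, hw1, one_mul]
    rw [Finset.sum_congr rfl he, Finset.sum_sub_distrib, h2]
    ring
  constructor
  · have : 0 ≤ Real.log S - ∑ v, w v * Real.log (g v) := by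
      rw [← hsumkey]
      exact Finset.sum_nonneg fun v _ => key v
    linarith
  · intro heq v hv
    have hz : ∑ v, (w v * (g v / S - 1) - w v * (Real.log (g v) - Real.log S)) = 0 := by
      rw [hsumkey, heq]; ring
    have hall := (Finset.sum_eq_zero_iff_of_nonneg (fun v _ => key v)).mp hz v (mem_univ v)
    have hwv : 0 < w v := (hw v).lt_of_ne (Ne.symm hv)
    have hgv := hg v hv
    have hlog : Real.log (g v) - Real.log S = Real.log (g v / S) :=
      (Real.log_div (ne_of_gt hgv) (ne_of_gt hSpos)).symm
    rw [hlog] at hall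
    have heq2 : Real.log (g v / S) = g v / S - 1 := by
      have h3 : w v * (g v / S - 1 - Real.log (g v / S)) = 0 := by linarith
      have := mul_eq_zero.mp h3
      rcases this with h | h
      · exact absurd h hv
      · linarith
    by_contra hne
    have hne2 : g v / S ≠ 1 := by
      intro h
      apply hne
      field_simp at h
      linarith
    have := Real.log_lt_sub_one_of_pos (div_pos hgv hSpos) hne2
    linarith

private lemma eig_le {V : Type*} [Fintype V] [Nonempty V] (M : V → V → ℝ)
    (hM : ∀ u v, 0 ≤ M u v) (x y : V → ℝ) (hx : ∀ v, 0 < x v) (hy : ∀ v, 0 < y v)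
    (α β : ℝ) (hα : 0 < α) (hβ : 0 < β)
    (hMx : ∀ u, ∑ v, M u v * x v = α * x u) (hMy : ∀ u, ∑ v, M u v * y v = β * y u) :
    α ≤ β := by
  by_contra hlt
  push_neg at hlt
  set c := Finset.univ.inf' Finset.univ_nonempty (fun v => y v / x v) with hc
  obtain ⟨vc, _, hvc⟩ := Finset.exists_mem_eq_inf' (Finset.univ_nonempty) (fun v => y v / x v)
  have hcpos : 0 < c := by rw [hc, hvc]; exact div_pos (hy vc) (hx vc)
  have hcx : ∀ v, c * x v ≤ y v := by
    intro v
    have := Finset.inf'_le (fun v => y v / x v) (Finset.mem_univ v)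
    rw [← hc] at this
    calc c * x v ≤ y v / x v * x v :=
          mul_le_mul_of_nonneg_right this (le_of_lt (hx v))
      _ = y v := div_mul_cancel₀ _ (ne_of_gt (hx v))
  have hiter : ∀ n u, c * (α ^ n * x u) ≤ β ^ n * y u := by
    intro n
    induction n with
    | zero => intro u; simpa using hcx u
    | succ n ih =>
      intro u
      have h1 : β ^ (n+1) * y u = ∑ v, M u v * (β ^ n * y v) := by
        rw [show (∑ v, M u v * (β ^ n * y v)) = β ^ n * ∑ v, M u v * y v by
          rw [Finset.mul_sum]; apply Finset.sum_congr rfl; intro v _; ring]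
        rw [hMy u]; ring
      have h2 : c * (α ^ (n+1) * x u) = ∑ v, M u v * (c * (α ^ n * x v)) := by
        rw [show (∑ v, M u v * (c * (α ^ n * x v))) = c * α ^ n * ∑ v, M u v * x v by
          rw [Finset.mul_sum]; apply Finset.sum_congr rfl; intro v _; ring]
        rw [hMx u]; ring
      rw [h1, h2]
      exact Finset.sum_le_sum fun v _ => mul_le_mul_of_nonneg_left (ih v) (hM u v)
  obtain ⟨u⟩ := (inferInstance : Nonempty V)
  have hq : (0:ℝ) < β / α := div_pos hβ hα
  have hq1 : β / α < 1 := (div_lt_one hα).mpr hlt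
  have hpos : 0 < c * x u / y u := div_pos (mul_pos hcpos (hx u)) (hy u)
  obtain ⟨n, hn⟩ := exists_pow_lt_of_lt_one hpos hq1
  have := hiter n u
  have h2 : (β / α) ^ n = β ^ n / α ^ n := div_pow β α n
  have hαn : (0:ℝ) < α ^ n := pow_pos hα n
  have hβn : (0:ℝ) < β ^ n := pow_pos hβ n
  rw [h2] at hn
  have h4 : c * x u / y u ≤ β ^ n / α ^ n := by
    rw [div_le_div_iff₀ (hy u) hαn]
    have h3 : c * x u * α ^ n = c * (α ^ n * x u) := by ring
    linarith
  linarith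

private lemma perron_exists {V : Type*} [Fintype V] [DecidableEq V] [Nonempty V]
    (A : Matrix V V ℝ) (hA0 : ∀ u v, 0 ≤ A u v) (hA1 : ∀ u v, A u v ≤ 1)
    (hrow : ∀ u, ∃ v, 0 < A u v) (m : ℕ) (hAm : ∀ u v, 0 < (A ^ m) u v) :
    ∃ (lam : ℝ) (r : V → ℝ), 0 < lam ∧ (∀ v, 0 < r v) ∧
      ∀ u, ∑ v, A u v * r v = lam * r u := by
  classical
  set B := A ^ m with hB
  -- bounds on entries of B
  obtain ⟨p₀, _, hp₀⟩ := Finset.exists_min_image (Finset.univ ×ˢ Finset.univ)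
    (fun p : V × V => B p.1 p.2) (Finset.univ_nonempty.product Finset.univ_nonempty)
  obtain ⟨p₁, _, hp₁⟩ := Finset.exists_max_image (Finset.univ ×ˢ Finset.univ)
    (fun p : V × V => B p.1 p.2) (Finset.univ_nonempty.product Finset.univ_nonempty)
  set ε := B p₀.1 p₀.2 with hε
  set Cm := B p₁.1 p₁.2 with hCm
  have hεpos : 0 < ε := hAm _ _
  have hCmpos : 0 < Cm := hAm _ _
  have hεle : ∀ u v, ε ≤ B u v := fun u v => hp₀ (u, v) (by simp)
  have hleCm : ∀ u v, B u v ≤ Cm := fun u v => hp₁ (u, v) (by simp)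
  set D := stdSimplex ℝ V with hD
  -- the image set K
  set K := (fun x => B.mulVec x) '' D with hK
  have hmulvec : ∀ (M : Matrix V V ℝ) (x : V → ℝ) u, M.mulVec x u = ∑ v, M u v * x v := by
    intro M x u; rfl
  have hKbound : ∀ y ∈ K, ∀ u, ε ≤ y u ∧ y u ≤ Cm := by
    rintro y ⟨x, hx, rfl⟩ u
    simp only [hmulvec]
    constructor
    · calc ε = ∑ v, ε * x v := by rw [← Finset.mul_sum, hx.2, mul_one]
        _ ≤ ∑ v, B u v * x v :=
          Finset.sum_le_sum fun v _ => mul_le_mul_of_nonneg_right (hεle u v) (hx.1 v)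
    · calc (∑ v, B u v * x v) ≤ ∑ v, Cm * x v :=
          Finset.sum_le_sum fun v _ => mul_le_mul_of_nonneg_right (hleCm u v) (hx.1 v)
        _ = Cm := by rw [← Finset.mul_sum, hx.2, mul_one]
  have hKcompact : IsCompact K := by
    apply (isCompact_stdSimplex ℝ V).image
    exact B.mulVecLin.continuous_of_finiteDimensional
  set C' := (Fintype.card V : ℝ) * Cm / ε with hC'
  have hC'pos : 0 < C' := by
    apply div_pos _ hεpos
    apply mul_pos _ hCmpos
    exact_mod_cast Fintype.card_pos
  -- the feasible set E
  set E : Set ((V → ℝ) × ℝ) := (K ×ˢ Set.Icc 0 C') ∩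
    {p | ∀ u, p.2 * p.1 u ≤ A.mulVec p.1 u} with hE
  have hEcompact : IsCompact E := by
    apply IsCompact.inter_right (hKcompact.prod isCompact_Icc)
    have : {p : (V → ℝ) × ℝ | ∀ u, p.2 * p.1 u ≤ A.mulVec p.1 u}
        = ⋂ u, {p : (V → ℝ) × ℝ | p.2 * p.1 u ≤ A.mulVec p.1 u} := by
      ext p; simp
    rw [this]
    apply isClosed_iInter
    intro u
    apply isClosed_le
    · exact continuous_snd.mul ((continuous_apply u).comp continuous_fst)
    · have : Continuous fun x : V → ℝ => A.mulVec x u :=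
        (continuous_apply u).comp A.mulVecLin.continuous_of_finiteDimensional
      exact this.comp continuous_fst
  -- a base point in K
  have hDne : D.Nonempty := ⟨fun _ => (Fintype.card V : ℝ)⁻¹, fun _ => by positivity, by
    rw [Finset.sum_const, nsmul_eq_mul, Finset.card_univ]
    field_simp⟩
  obtain ⟨x₀, hx₀⟩ := hDne
  have hx₁K : B.mulVec x₀ ∈ K := ⟨x₀, hx₀, rfl⟩
  have hEne : E.Nonempty := by
    refine ⟨(B.mulVec x₀, 0), ⟨⟨hx₁K, ⟨le_refl 0, le_of_lt hC'pos⟩⟩, ?_⟩⟩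
    intro u
    simp only [zero_mul, hmulvec]
    exact Finset.sum_nonneg fun v _ => mul_nonneg (hA0 u v)
      (le_of_lt (lt_of_lt_of_le hεpos ((hKbound _ hx₁K v).1)))
  obtain ⟨⟨r, lam⟩, hrE, hmax⟩ := hEcompact.exists_isMaxOn hEne
    (continuous_snd.continuousOn)
  have hrK : r ∈ K := hrE.1.1
  have hrpos : ∀ v, 0 < r v := fun v => lt_of_lt_of_le hεpos ((hKbound r hrK v).1)
  have hrle : ∀ v, r v ≤ Cm := fun v => (hKbound r hrK v).2
  have hlam0 : 0 ≤ lam := hrE.1.2.1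
  -- generic: for y ∈ K, the min-ratio gives a feasible (y, μ) with μ positive
  have hfeas : ∀ y ∈ K, ∃ μ, (y, μ) ∈ E ∧ ∃ uw, μ = A.mulVec y uw / y uw := by
    intro y hyK
    have hypos : ∀ v, 0 < y v := fun v => lt_of_lt_of_le hεpos ((hKbound y hyK v).1)
    set μ := Finset.univ.inf' Finset.univ_nonempty (fun u => A.mulVec y u / y u) with hμ
    obtain ⟨uc, _, huc⟩ := Finset.exists_mem_eq_inf' Finset.univ_nonempty
      (fun u => A.mulVec y u / y u)
    have hμle : ∀ u, μ ≤ A.mulVec y u / y u := fun u =>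
      Finset.inf'_le _ (Finset.mem_univ u)
    refine ⟨μ, ⟨⟨hyK, ⟨?_, ?_⟩⟩, ?_⟩, uc, huc⟩
    · -- 0 ≤ μ
      rw [hμ, huc]
      apply div_nonneg _ (le_of_lt (hypos uc))
      rw [hmulvec]
      exact Finset.sum_nonneg fun v _ => mul_nonneg (hA0 uc v) (le_of_lt (hypos v))
    · -- μ ≤ C'
      rw [hμ, huc, hC']
      have h1 : A.mulVec y uc ≤ (Fintype.card V : ℝ) * Cm := by
        rw [hmulvec]
        calc (∑ v, A uc v * y v) ≤ ∑ v, 1 * Cm := Finset.sum_le_sum fun v _ =>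
              mul_le_mul (hA1 uc v) ((hKbound y hyK v).2) (le_of_lt (hypos v)) one_pos.le
          _ = (Fintype.card V : ℝ) * Cm := by
              rw [Finset.sum_const, nsmul_eq_mul, Finset.card_univ]; ring
      exact div_le_div₀ (by positivity) h1 hεpos ((hKbound y hyK uc).1)
    · -- feasibility
      intro u
      have := hμle u
      calc μ * y u ≤ A.mulVec y u / y u * y u :=
            mul_le_mul_of_nonneg_right this (le_of_lt (hypos u))
        _ = A.mulVec y u := div_mul_cancel₀ _ (ne_of_gt (hypos u))
  -- lam is positive
  have hlampos : 0 < lam := by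
    obtain ⟨μ, hμE, uc, huc⟩ := hfeas _ hx₁K
    have h1 : μ ≤ lam := hmax hμE
    have hypos : ∀ v, 0 < B.mulVec x₀ v := fun v =>
      lt_of_lt_of_le hεpos ((hKbound _ hx₁K v).1)
    have h2 : 0 < μ := by
      rw [huc]
      apply div_pos _ (hypos uc)
      rw [hmulvec]
      obtain ⟨v₁, hv₁⟩ := hrow uc
      have : (0:ℝ) < A uc v₁ * B.mulVec x₀ v₁ := mul_pos hv₁ (hypos v₁)
      apply Finset.sum_pos' (fun v _ => mul_nonneg (hA0 uc v) (le_of_lt (hypos v)))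
        ⟨v₁, Finset.mem_univ v₁, this⟩
    linarith
  -- the slack vector is zero
  have hslack : ∀ u, lam * r u ≤ A.mulVec r u := hrE.2
  have heig : A.mulVec r = lam • r := by
    by_contra hne
    set y := A.mulVec r - lam • r with hy
    have hy0 : ∀ u, 0 ≤ y u := fun u => by
      simp only [hy, Pi.sub_apply, Pi.smul_apply, smul_eq_mul, sub_nonneg]
      exact hslack u
    have hyne : ∃ v, 0 < y v := by
      by_contra hc
      push_neg at hc
      apply hne
      funext u
      have : y u = 0 := le_antisymm (hc u) (hy0 u)
      have := this
      simp only [hy, Pi.sub_apply, Pi.smul_apply, smul_eq_mul, sub_eq_zero] at this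
      simp [this, Pi.smul_apply]
    obtain ⟨v₁, hv₁⟩ := hyne
    -- B.mulVec y is strictly positive
    have hBy : ∀ u, 0 < B.mulVec y u := by
      intro u
      rw [hmulvec]
      apply Finset.sum_pos' (fun v _ => mul_nonneg (le_of_lt (hAm u v)) (hy0 v))
        ⟨v₁, Finset.mem_univ v₁, mul_pos (hAm u v₁) hv₁⟩
    -- normalize r into the simplex
    set N := ∑ v, r v with hN
    have hNpos : 0 < N := Finset.sum_pos (fun v _ => hrpos v) Finset.univ_nonempty
    have hrD : N⁻¹ • r ∈ D := by
      constructor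
      · intro v
        exact mul_nonneg (inv_nonneg.mpr (le_of_lt hNpos)) (le_of_lt (hrpos v))
      · simp only [Pi.smul_apply, smul_eq_mul]
        rw [← Finset.mul_sum, ← hN, inv_mul_cancel₀ (ne_of_gt hNpos)]
    set r' := B.mulVec (N⁻¹ • r) with hr'
    have hr'K : r' ∈ K := ⟨N⁻¹ • r, hrD, rfl⟩
    have hr'pos : ∀ v, 0 < r' v := fun v => lt_of_lt_of_le hεpos ((hKbound r' hr'K v).1)
    -- key commutation: A.mulVec r' = lam • r' + N⁻¹ • B.mulVec y
    have hcomm : A * B = B * A := by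
      rw [hB, ← pow_succ', ← pow_succ]
    have hAr' : A.mulVec r' = lam • r' + N⁻¹ • B.mulVec y := by
      rw [hr', Matrix.mulVec_smul, Matrix.mulVec_smul, Matrix.mulVec_mulVec, hcomm,
        ← Matrix.mulVec_mulVec]
      have : A.mulVec r = lam • r + y := by
        funext u
        simp [hy]
      rw [this, Matrix.mulVec_add, Matrix.mulVec_smul]
      funext u
      simp only [Pi.add_apply, Pi.smul_apply, smul_eq_mul]
      ring
    -- strict improvement
    have hstrict : ∀ u, lam * r' u < A.mulVec r' u := by
      intro u
      rw [hAr']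
      simp only [Pi.add_apply, Pi.smul_apply, smul_eq_mul]
      have : 0 < N⁻¹ * B.mulVec y u := mul_pos (inv_pos.mpr hNpos) (hBy u)
      linarith
    obtain ⟨μ', hμ'E, _⟩ := hfeas r' hr'K
    have hμ'lam : μ' ≤ lam := hmax hμ'E
    -- but the min ratio of r' exceeds lam — contradiction via the actual inf'
    set μ'' := Finset.univ.inf' Finset.univ_nonempty (fun u => A.mulVec r' u / r' u) with hμ''
    obtain ⟨uc, _, huc⟩ := Finset.exists_mem_eq_inf' (Finset.univ_nonempty)
      (fun u => A.mulVec r' u / r' u)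
    have hμ''gt : lam < μ'' := by
      rw [hμ'', huc]
      rw [lt_div_iff₀ (hr'pos uc)]
      have := hstrict uc
      linarith
    -- (r', μ'') is feasible
    have hμ''E : (r', μ'') ∈ E := by
      refine ⟨⟨hr'K, ⟨le_trans hlam0 (le_of_lt hμ''gt), ?_⟩⟩, ?_⟩
      · -- μ'' ≤ C'
        rw [hμ'', huc]
        have h1 : A.mulVec r' uc ≤ (Fintype.card V : ℝ) * Cm := by
          rw [hmulvec]
          calc (∑ v, A uc v * r' v) ≤ ∑ v, 1 * Cm := Finset.sum_le_sum fun v _ =>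
                mul_le_mul (hA1 uc v) ((hKbound r' hr'K v).2) (le_of_lt (hr'pos v)) one_pos.le
            _ = (Fintype.card V : ℝ) * Cm := by
                rw [Finset.sum_const, nsmul_eq_mul, Finset.card_univ]; ring
        exact div_le_div₀ (by positivity) h1 hεpos ((hKbound r' hr'K uc).1)
      · intro u
        have h2 : μ'' ≤ A.mulVec r' u / r' u := Finset.inf'_le _ (Finset.mem_univ u)
        calc μ'' * r' u ≤ A.mulVec r' u / r' u * r' u :=
              mul_le_mul_of_nonneg_right h2 (le_of_lt (hr'pos u))
          _ = A.mulVec r' u := div_mul_cancel₀ _ (ne_of_gt (hr'pos u))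
    have h6 : μ'' ≤ lam := hmax hμ''E
    linarith
  refine ⟨lam, r, hlampos, hrpos, fun u => ?_⟩
  have := congrFun heig u
  rw [hmulvec] at this
  simpa using this

private lemma exists_stationary {V : Type*} [Fintype V] [DecidableEq V] [Nonempty V]
    (P : Matrix V V ℝ) (hP : (∀ u v, 0 ≤ P u v) ∧ ∀ u, ∑ v, P u v = 1) :
    ∃ pi : V → ℝ, (∀ v, 0 ≤ pi v) ∧ (∑ v, pi v = 1) ∧ ∀ v, ∑ u, pi u * P u v = pi v := by
  classical
  have hdet : (P - 1).det = 0 := by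
    rw [← Matrix.exists_mulVec_eq_zero_iff]
    refine ⟨fun _ => 1, ?_, ?_⟩
    · intro h
      have := congrFun h (Classical.arbitrary V)
      simp at this
    · funext u
      simp only [Matrix.mulVec, dotProduct, Matrix.sub_apply, Matrix.one_apply]
      simp only [sub_mul, mul_one]
      rw [Finset.sum_sub_distrib, hP.2 u]
      simp [Pi.zero_apply]
  have hdetT : (P - 1).transpose.det = 0 := by rw [Matrix.det_transpose]; exact hdet
  obtain ⟨x, hx0, hx⟩ := (Matrix.exists_mulVec_eq_zero_iff).mpr hdetT
  have hxP : ∀ v, ∑ u, x u * P u v = x v := by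
    intro v
    have := congrFun hx v
    simp only [Matrix.mulVec, dotProduct, Matrix.transpose_apply, Matrix.sub_apply,
      Matrix.one_apply, Pi.zero_apply] at this
    simp only [sub_mul] at this
    rw [Finset.sum_sub_distrib] at this
    have h2 : ∑ u, (if u = v then (1:ℝ) else 0) * x u = x v := by
      simp
    rw [h2] at this
    have h3 : ∀ u, P u v * x u = x u * P u v := fun u => mul_comm _ _
    rw [Finset.sum_congr rfl (fun u _ => h3 u)] at this
    linarith
  set y := fun v => |x v| with hy
  have hyP : ∀ v, ∑ u, y u * P u v = y v := by
    have hle : ∀ v, y v ≤ ∑ u, y u * P u v := by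
      intro v
      calc y v = |∑ u, x u * P u v| := by rw [hxP v]
        _ ≤ ∑ u, |x u * P u v| := Finset.abs_sum_le_sum_abs _ _
        _ = ∑ u, y u * P u v := by
            apply Finset.sum_congr rfl
            intro u _
            rw [abs_mul, abs_of_nonneg (hP.1 u v)]
    have hsum : ∑ v, (∑ u, y u * P u v - y v) = 0 := by
      rw [Finset.sum_sub_distrib, Finset.sum_comm]
      have : ∀ u, ∑ v, y u * P u v = y u := by
        intro u; rw [← Finset.mul_sum, hP.2 u, mul_one]
      rw [Finset.sum_congr rfl (fun u _ => this u)]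
      ring
    intro v
    have := (Finset.sum_eq_zero_iff_of_nonneg
      (fun v _ => sub_nonneg.mpr (hle v))).mp hsum v (mem_univ v)
    linarith
  have hS : 0 < ∑ v, y v := by
    apply Finset.sum_pos' (fun v _ => abs_nonneg _)
    have : ∃ v, x v ≠ 0 := by
      by_contra hc
      push_neg at hc
      exact hx0 (funext hc)
    obtain ⟨v, hv⟩ := this
    exact ⟨v, mem_univ v, abs_pos.mpr hv⟩
  refine ⟨fun v => (∑ v', y v')⁻¹ * y v, fun v => ?_, ?_, fun v => ?_⟩
  · exact mul_nonneg (inv_nonneg.mpr (le_of_lt hS)) (abs_nonneg _)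
  · rw [← Finset.mul_sum, inv_mul_cancel₀ (ne_of_gt hS)]
  · have : ∀ u, (∑ v', y v')⁻¹ * y u * P u v = (∑ v', y v')⁻¹ * (y u * P u v) :=
      fun u => by ring
    rw [Finset.sum_congr rfl (fun u _ => this u), ← Finset.mul_sum, hyP v]

private lemma sum_station {V : Type*} [Fintype V] (P : Matrix V V ℝ) (pi : V → ℝ)
    (hst : ∀ v, ∑ u, pi u * P u v = pi v) (f : V → ℝ) :
    ∑ u, ∑ v, pi u * P u v * f v = ∑ v, pi v * f v := by
  rw [Finset.sum_comm]
  apply Finset.sum_congr rfl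
  intro v _
  rw [← hst v, Finset.sum_mul]

private lemma sum_rowone {V : Type*} [Fintype V] (P : Matrix V V ℝ) (pi : V → ℝ)
    (hrow : ∀ u, ∑ v, P u v = 1) (g : V → ℝ) :
    ∑ u, ∑ v, pi u * P u v * g u = ∑ u, pi u * g u := by
  apply Finset.sum_congr rfl
  intro u _
  have : ∀ v ∈ Finset.univ, pi u * P u v * g u = pi u * g u * P u v := fun v _ => by ring
  rw [Finset.sum_congr rfl this, ← Finset.mul_sum, hrow u, mul_one]

end AuxiliaryLemmas

/-- if `(V,P)` is a measure of maximal entropy — i.e. `h(V,P) ≥ h(V,P')` for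
every stochastic `P'` (with stationary distribution `π'`) whose support is contained in that
of `P` — then `L(V,P) = h(V,P)`, i.e. `-log λ = h(V,P)` for `λ` the Perron eigenvalue of
`Q(u,v) = P(u,v)²`. -/
theorem L_eq_entropy_of_maximal_entropy [Fintype V] [DecidableEq V] (P : Matrix V V ℝ)
    (hP : IsStochastic P) (hmix : IsMixing P) (pi : V → ℝ) (hpi : IsStationaryDistrib P pi)
    (lam : ℝ) (φ : V → ℝ) (hφ : ∀ v, 0 < φ v)
    (heig : ∀ u, ∑ v, (P u v) ^ 2 * φ v = lam * φ u)
    (hmax : ∀ (P' : Matrix V V ℝ) (pi' : V → ℝ), IsStochastic P' → IsStationaryDistrib P' pi' →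
      (∀ u v, 0 < P' u v → 0 < P u v) → chainEntropy P' pi' ≤ chainEntropy P pi) :
    -Real.log lam = chainEntropy P pi := by
  classical
  obtain ⟨hP0, hP1⟩ := hP
  obtain ⟨m, hm0, hPm⟩ := hmix
  obtain ⟨hpi0, hpi1, hpist⟩ := hpi
  have hNe : Nonempty V := by
    by_contra h
    rw [not_nonempty_iff] at h
    rw [Finset.univ_eq_empty, Finset.sum_empty] at hpi1
    norm_num at hpi1
  have hrowP : ∀ u, ∃ v, 0 < P u v := by
    intro u
    by_contra hc
    push_neg at hc
    have hz : ∀ v ∈ Finset.univ, P u v = 0 := fun v _ => le_antisymm (hc v) (hP0 u v)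
    have h := hP1 u
    rw [Finset.sum_congr rfl hz, Finset.sum_const_zero] at h
    norm_num at h
  have hPle1 : ∀ u v, P u v ≤ 1 := by
    intro u v
    calc P u v ≤ ∑ v', P u v' := Finset.single_le_sum (fun v' _ => hP0 u v') (mem_univ v)
      _ = 1 := hP1 u
  set A : Matrix V V ℝ := Matrix.of (fun u v => if 0 < P u v then (1:ℝ) else 0) with hA
  have hAapp : ∀ u v, A u v = if 0 < P u v then (1:ℝ) else 0 := fun u v => rfl
  have hA0 : ∀ u v, 0 ≤ A u v := by
    intro u v; rw [hAapp]; split <;> norm_num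
  have hA1 : ∀ u v, A u v ≤ 1 := by
    intro u v; rw [hAapp]; split <;> norm_num
  have hPleA : ∀ u v, P u v ≤ A u v := by
    intro u v
    rw [hAapp]
    split
    · exact hPle1 u v
    · next h => exact le_of_eq (le_antisymm (not_lt.mp h) (hP0 u v))
  have hrowA : ∀ u, ∃ v, 0 < A u v := by
    intro u
    obtain ⟨v, hv⟩ := hrowP u
    exact ⟨v, by rw [hAapp]; simp [hv]⟩
  have hpow : ∀ n : ℕ, ∀ u v, 0 ≤ (P ^ n) u v ∧ 0 ≤ (A ^ n) u v ∧ (P ^ n) u v ≤ (A ^ n) u v := by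
    intro n
    induction n with
    | zero =>
      intro u v
      simp only [pow_zero, Matrix.one_apply]
      split <;> norm_num
    | succ n ih =>
      intro u v
      simp only [pow_succ, Matrix.mul_apply]
      refine ⟨Finset.sum_nonneg fun w _ => mul_nonneg (ih u w).1 (hP0 w v),
        Finset.sum_nonneg fun w _ => mul_nonneg (ih u w).2.1 (hA0 w v),
        Finset.sum_le_sum fun w _ => mul_le_mul (ih u w).2.2 (hPleA w v) (hP0 w v) (ih u w).2.1⟩
  have hAm : ∀ u v, 0 < (A ^ m) u v := fun u v => lt_of_lt_of_le (hPm u v) (hpow m u v).2.2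
  obtain ⟨lamA, r, hlamA, hr, heigA⟩ := perron_exists A hA0 hA1 hrowA m hAm
  -- pi is everywhere positive
  have hpist_pow : ∀ n : ℕ, ∀ v, ∑ u, pi u * (P ^ n) u v = pi v := by
    intro n
    induction n with
    | zero =>
      intro v
      simp only [pow_zero, Matrix.one_apply]
      simp [Finset.sum_ite_eq', mul_comm]
    | succ n ih =>
      intro v
      simp only [pow_succ, Matrix.mul_apply]
      have h1 : ∀ u ∈ Finset.univ, pi u * ∑ w, (P ^ n) u w * P w v
          = ∑ w, pi u * (P ^ n) u w * P w v := by
        intro u _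
        rw [Finset.mul_sum]
        exact Finset.sum_congr rfl fun w _ => by ring
      calc ∑ u, pi u * ∑ w, (P ^ n) u w * P w v
          = ∑ w, (∑ u, pi u * (P ^ n) u w) * P w v := by
            rw [Finset.sum_congr rfl h1, Finset.sum_comm]
            exact Finset.sum_congr rfl fun w _ => (Finset.sum_mul _ _ _).symm
        _ = ∑ w, pi w * P w v := by
            apply Finset.sum_congr rfl
            intro w _
            rw [ih w]
        _ = pi v := hpist v
  have hpipos : ∀ v, 0 < pi v := by
    intro v
    have hex : ∃ u, 0 < pi u := by
      by_contra hc
      push_neg at hc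
      have : ∀ u ∈ Finset.univ, pi u = 0 := fun u _ => le_antisymm (hc u) (hpi0 u)
      rw [Finset.sum_congr rfl this, Finset.sum_const_zero] at hpi1
      norm_num at hpi1
    obtain ⟨u₀, hu₀⟩ := hex
    rw [← hpist_pow m v]
    exact Finset.sum_pos' (fun u _ => mul_nonneg (hpi0 u) (hpow m u v).1)
      ⟨u₀, mem_univ u₀, mul_pos hu₀ (hPm u₀ v)⟩
  -- the Parry chain
  set Ps : Matrix V V ℝ := Matrix.of (fun u v => if 0 < P u v then r v / (lamA * r u) else 0)
    with hPs
  have hPsapp : ∀ u v, Ps u v = if 0 < P u v then r v / (lamA * r u) else 0 := fun u v => rfl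
  have hPs0 : ∀ u v, 0 ≤ Ps u v := by
    intro u v
    rw [hPsapp]
    split
    · exact le_of_lt (div_pos (hr v) (mul_pos hlamA (hr u)))
    · exact le_refl 0
  have hPsrow : ∀ u, ∑ v, Ps u v = 1 := by
    intro u
    have h1 : ∀ v ∈ Finset.univ, Ps u v = A u v * r v / (lamA * r u) := by
      intro v _
      rw [hPsapp, hAapp]
      split
      · rw [one_mul]
      · rw [zero_mul, zero_div]
    rw [Finset.sum_congr rfl h1, ← Finset.sum_div, heigA u,
      div_self (ne_of_gt (mul_pos hlamA (hr u)))]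
  obtain ⟨ps, hps0, hps1, hpsst⟩ := exists_stationary Ps ⟨hPs0, hPsrow⟩
  -- entropy of the Parry chain is log lamA
  have hlogPs : ∀ u v, Ps u v * Real.log (Ps u v)
      = Ps u v * (Real.log (r v) - Real.log lamA - Real.log (r u)) := by
    intro u v
    rw [hPsapp]
    split
    · next h =>
      rw [Real.log_div (ne_of_gt (hr v)) (ne_of_gt (mul_pos hlamA (hr u))),
        Real.log_mul (ne_of_gt hlamA) (ne_of_gt (hr u))]
      ring
    · simp
  have hstar_ent : chainEntropy Ps ps = Real.log lamA := by
    unfold chainEntropy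
    have h1 : ∀ u ∈ Finset.univ, ∀ v ∈ Finset.univ, ps u * Ps u v * Real.log (Ps u v)
        = ps u * Ps u v * Real.log (r v)
          - ps u * Ps u v * (Real.log lamA + Real.log (r u)) := by
      intro u _ v _
      have := hlogPs u v
      calc ps u * Ps u v * Real.log (Ps u v)
          = ps u * (Ps u v * Real.log (Ps u v)) := by ring
        _ = ps u * (Ps u v * (Real.log (r v) - Real.log lamA - Real.log (r u))) := by rw [this]
        _ = ps u * Ps u v * Real.log (r v)
            - ps u * Ps u v * (Real.log lamA + Real.log (r u)) := by ring
    have h2 : ∑ u, ∑ v, ps u * Ps u v * Real.log (Ps u v)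
        = (∑ u, ∑ v, ps u * Ps u v * Real.log (r v))
          - ∑ u, ∑ v, ps u * Ps u v * (Real.log lamA + Real.log (r u)) := by
      rw [← Finset.sum_sub_distrib]
      apply Finset.sum_congr rfl
      intro u hu
      rw [← Finset.sum_sub_distrib]
      exact Finset.sum_congr rfl fun v hv => h1 u hu v hv
    rw [h2, sum_station Ps ps hpsst (fun v => Real.log (r v)),
      sum_rowone Ps ps hPsrow (fun u => Real.log lamA + Real.log (r u))]
    have h3 : ∑ u, ps u * (Real.log lamA + Real.log (r u))
        = Real.log lamA + ∑ u, ps u * Real.log (r u) := by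
      have : ∀ u ∈ Finset.univ, ps u * (Real.log lamA + Real.log (r u))
          = ps u * Real.log lamA + ps u * Real.log (r u) := fun u _ => by ring
      rw [Finset.sum_congr rfl this, Finset.sum_add_distrib, ← Finset.sum_mul, hps1, one_mul]
    rw [h3]
    ring
  -- maximality gives the lower bound
  have hge : Real.log lamA ≤ chainEntropy P pi := by
    rw [← hstar_ent]
    apply hmax Ps ps ⟨hPs0, hPsrow⟩ ⟨hps0, hps1, hpsst⟩
    intro u v h
    rw [hPsapp] at h
    by_contra hc
    rw [if_neg hc] at h
    exact lt_irrefl 0 h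
  -- Jensen rows
  set row : V → ℝ := fun u =>
    ∑ v, P u v * (Real.log (r v) - Real.log (P u v) - Real.log (r u)) with hrowdef
  have hrowJ : ∀ u, row u ≤ Real.log lamA ∧
      (row u = Real.log lamA → ∀ v, 0 < P u v → P u v = r v / (lamA * r u)) := by
    intro u
    set g : V → ℝ := fun v => if 0 < P u v then r v / (P u v * r u) else 1 with hg
    have hgapp : ∀ v, g v = if 0 < P u v then r v / (P u v * r u) else 1 := fun v => rfl
    have hgpos : ∀ v, P u v ≠ 0 → 0 < g v := by
      intro v hv
      have hvpos : 0 < P u v := (hP0 u v).lt_of_ne (Ne.symm hv)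
      rw [hgapp, if_pos hvpos]
      exact div_pos (hr v) (mul_pos hvpos (hr u))
    have hS : ∑ v, P u v * g v = lamA := by
      have h1 : ∀ v ∈ Finset.univ, P u v * g v = A u v * r v / r u := by
        intro v _
        rw [hgapp, hAapp]
        split
        · next h =>
          rw [one_mul]
          rw [show P u v * (r v / (P u v * r u)) = P u v * r v / (P u v * r u) by ring,
            mul_div_mul_left (r v) (r u) (ne_of_gt h)]
        · next h =>
          have : P u v = 0 := le_antisymm (not_lt.mp h) (hP0 u v)
          rw [this, zero_mul, zero_mul, zero_div]
      rw [Finset.sum_congr rfl h1, ← Finset.sum_div, heigA u,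
        mul_div_assoc, div_self (ne_of_gt (hr u)), mul_one]
    have hL : ∑ v, P u v * Real.log (g v) = row u := by
      apply Finset.sum_congr rfl
      intro v _
      rw [hgapp]
      rcases lt_or_ge 0 (P u v) with h | h
      · rw [if_pos h, Real.log_div (ne_of_gt (hr v)) (ne_of_gt (mul_pos h (hr u))),
          Real.log_mul (ne_of_gt h) (ne_of_gt (hr u))]
        ring
      · have : P u v = 0 := le_antisymm h (hP0 u v)
        rw [this]
        simp
    obtain ⟨hj1, hj2⟩ := jensen_log (P u) g (hP0 u) (hP1 u) hgpos
    rw [hS, hL] at hj1 hj2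
    refine ⟨hj1, fun heq v hv => ?_⟩
    have hgv := hj2 heq v (ne_of_gt hv)
    rw [hgapp, if_pos hv] at hgv
    rw [div_eq_iff (ne_of_gt (mul_pos hv (hr u)))] at hgv
    rw [eq_comm, div_eq_iff (ne_of_gt (mul_pos hlamA (hr u)))]
    linear_combination hgv
  -- the pi-weighted sum of rows equals the entropy
  have hsumrow : ∑ u, pi u * row u = chainEntropy P pi := by
    unfold chainEntropy
    have h1 : ∀ u ∈ Finset.univ, pi u * row u
        = (∑ v, pi u * P u v * Real.log (r v))
          - (∑ v, pi u * P u v * Real.log (P u v))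
          - (∑ v, pi u * P u v * Real.log (r u)) := by
      intro u _
      rw [hrowdef]
      simp only []
      rw [Finset.mul_sum, ← Finset.sum_sub_distrib, ← Finset.sum_sub_distrib]
      apply Finset.sum_congr rfl
      intro v _
      ring
    rw [Finset.sum_congr rfl h1, Finset.sum_sub_distrib, Finset.sum_sub_distrib,
      sum_station P pi hpist (fun v => Real.log (r v)),
      sum_rowone P pi hP1 (fun u => Real.log (r u))]
    ring
  -- upper bound and equality
  have hle : chainEntropy P pi ≤ Real.log lamA := by
    rw [← hsumrow]
    calc ∑ u, pi u * row u ≤ ∑ u, pi u * Real.log lamA :=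
          Finset.sum_le_sum fun u _ =>
            mul_le_mul_of_nonneg_left (hrowJ u).1 (hpi0 u)
      _ = Real.log lamA := by rw [← Finset.sum_mul, hpi1, one_mul]
  have hent : chainEntropy P pi = Real.log lamA := le_antisymm hle hge
  have hroweq : ∀ u, row u = Real.log lamA := by
    have hz : ∑ u, pi u * (Real.log lamA - row u) = 0 := by
      have : ∀ u ∈ Finset.univ, pi u * (Real.log lamA - row u)
          = pi u * Real.log lamA - pi u * row u := fun u _ => by ring
      rw [Finset.sum_congr rfl this, Finset.sum_sub_distrib, ← Finset.sum_mul, hpi1, one_mul,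
        hsumrow, hent, sub_self]
    intro u
    have := (Finset.sum_eq_zero_iff_of_nonneg (fun u _ =>
      mul_nonneg (hpi0 u) (sub_nonneg.mpr (hrowJ u).1))).mp hz u (mem_univ u)
    rcases mul_eq_zero.mp this with h | h
    · exact absurd h (ne_of_gt (hpipos u))
    · linarith [sub_eq_zero.mp h]
  have hparry : ∀ u v, 0 < P u v → P u v = r v / (lamA * r u) :=
    fun u v hv => (hrowJ u).2 (hroweq u) v hv
  -- r⁻¹ is an eigenvector of Q with eigenvalue lamA⁻¹
  have heigQ : ∀ u, ∑ v, (P u v) ^ 2 * (r v)⁻¹ = lamA⁻¹ * (r u)⁻¹ := by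
    intro u
    have h1 : ∀ v ∈ Finset.univ, (P u v) ^ 2 * (r v)⁻¹
        = A u v * r v * (lamA ^ 2 * (r u) ^ 2)⁻¹ := by
      intro v _
      rw [hAapp]
      split
      · next h =>
        rw [hparry u v h, one_mul, div_pow]
        field_simp [ne_of_gt (hr v), ne_of_gt hlamA, ne_of_gt (hr u)]
      · next h =>
        have : P u v = 0 := le_antisymm (not_lt.mp h) (hP0 u v)
        rw [this, zero_mul, zero_mul]
        ring
    have h2 : ∀ v ∈ Finset.univ, A u v * r v * (lamA ^ 2 * (r u) ^ 2)⁻¹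
        = (lamA ^ 2 * (r u) ^ 2)⁻¹ * (A u v * r v) := fun v _ => by ring
    rw [Finset.sum_congr rfl h1, Finset.sum_congr rfl h2, ← Finset.mul_sum, heigA u]
    field_simp [ne_of_gt hlamA, ne_of_gt (hr u)]
  -- lam is positive
  have hlampos : 0 < lam := by
    obtain ⟨u⟩ := hNe
    obtain ⟨v₁, hv₁⟩ := hrowP u
    have h1 : 0 < ∑ v, (P u v) ^ 2 * φ v :=
      Finset.sum_pos' (fun v _ => mul_nonneg (sq_nonneg _) (le_of_lt (hφ v)))
        ⟨v₁, mem_univ v₁, mul_pos (pow_pos hv₁ 2) (hφ v₁)⟩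
    rw [heig u] at h1
    by_contra hc
    push_neg at hc
    nlinarith [hφ u]
  -- eigenvalue uniqueness
  have hlameq : lam = lamA⁻¹ := by
    have h1 := eig_le (fun u v => (P u v) ^ 2) (fun u v => sq_nonneg _) φ
      (fun v => (r v)⁻¹) hφ (fun v => inv_pos.mpr (hr v)) lam lamA⁻¹ hlampos
      (inv_pos.mpr hlamA) heig heigQ
    have h2 := eig_le (fun u v => (P u v) ^ 2) (fun u v => sq_nonneg _)
      (fun v => (r v)⁻¹) φ (fun v => inv_pos.mpr (hr v)) hφ lamA⁻¹ lam
      (inv_pos.mpr hlamA) hlampos heigQ heig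
    linarith
  rw [hlameq, Real.log_inv, neg_neg, hent]
end
end
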